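/- If for valid strings g, h ∈ Valid_B the prefix state s^{(i)}_M = * {⋄-fold of res(g_j h_j) for j ≤ i} equals MM for some i ∈ [1,B], then g = h and s^{(j)}_M = MM for all j ∈ [i,B]. -/

import Mathlib

/-- A Kleene "bit": `some b` is a stable bit, `none` is metastable `M`. -/
abbrev KBit := Option Bool

/-- The `B`-bit binary reflected Gray code (bit `0` most significant). -/
def rg : (B : ℕ) → ℕ → (Fin B → Bool)
  | 0, _ => fun i => i.elim0
  | B + 1, x =>
      Fin.cons (decide (2 ^ B ≤ x)) (rg B (if x < 2 ^ B then x else 2 ^ (B + 1) - 1 - x))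

/-- Decoding of a `B`-bit binary reflected Gray code string. -/
def grayVal : (B : ℕ) → (Fin B → Bool) → ℕ
  | 0, _ => 0
  | B + 1, g =>
      if g 0 then 2 ^ (B + 1) - 1 - grayVal B (fun i => g i.succ)
      else grayVal B (fun i => g i.succ)

/-- The (stable) Gray codeword `rg_B(x)` viewed as a string over `{0,1,M}`. -/
def stableStr (B : ℕ) (x : ℕ) : Fin B → KBit := fun i => some (rg B x i)

/-- The superposition `rg_B(x) * rg_B(x+1)` of two consecutive Gray codewords. -/
def superStr (B : ℕ) (x : ℕ) : Fin B → KBit :=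
  fun i => if rg B x i = rg B (x + 1) i then some (rg B x i) else none

/-- Valid strings of length `B`: Gray codewords, or superpositions of two
consecutive Gray codewords. -/
def Valid (B : ℕ) : Set (Fin B → KBit) :=
  {g | (∃ x, x < 2 ^ B ∧ g = stableStr B x) ∨ (∃ x, x + 1 < 2 ^ B ∧ g = superStr B x)}

/-- The rank of a valid string in the total order `≺`: `rg_B(x)` has rank `2x` and
`rg_B(x) * rg_B(x+1)` has rank `2x + 1`. -/
noncomputable def rank (B : ℕ) (g : Fin B → KBit) : ℕ :=
  sInf {n | (∃ x, n = 2 * x ∧ g = stableStr B x) ∨ (∃ x, n = 2 * x + 1 ∧ g = superStr B x)}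

/-- The total order `⪯` on valid strings. -/
noncomputable def preceq (B : ℕ) (g h : Fin B → KBit) : Prop := rank B g ≤ rank B h

/-- The resolution of a string over `{0,1,M}`. -/
def res {B : ℕ} (x : Fin B → KBit) : Set (Fin B → Bool) :=
  {y | ∀ i : Fin B, ∀ b : Bool, x i = some b → y i = b}

open Classical in
/-- The superposition of a set of binary strings. -/
noncomputable def supStr {B : ℕ} (S : Set (Fin B → Bool)) : Fin B → KBit :=
  fun i =>
    if ∀ y ∈ S, y i = true then some true
    else if ∀ y ∈ S, y i = false then some false
    else none

/-- `max^rg` of two stable Gray code strings: the one of larger decoded value. -/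
def maxrg (B : ℕ) (g h : Fin B → Bool) : Fin B → Bool :=
  if grayVal B h ≤ grayVal B g then g else h

/-- `min^rg` of two stable Gray code strings: the one of smaller decoded value. -/
def minrg (B : ℕ) (g h : Fin B → Bool) : Fin B → Bool :=
  if grayVal B h ≤ grayVal B g then h else g

/-- The metastable closure `max^rg_M`, taken jointly over all resolutions of the pair. -/
noncomputable def maxrgM (B : ℕ) (g h : Fin B → KBit) : Fin B → KBit :=
  supStr {z | ∃ g' ∈ res g, ∃ h' ∈ res h, z = maxrg B g' h'}

/-- The metastable closure `min^rg_M`, taken jointly over all resolutions of the pair. -/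
noncomputable def minrgM (B : ℕ) (g h : Fin B → KBit) : Fin B → KBit :=
  supStr {z | ∃ g' ∈ res g, ∃ h' ∈ res h, z = minrg B g' h'}

/-- The transition operator `⋄` of the Gray-code comparison FSM:
`00 ⋄ x = x`; `01` and `10` are absorbing; `11 ⋄ 00 = 11`, `11 ⋄ 01 = 10`,
`11 ⋄ 11 = 00`, `11 ⋄ 10 = 01`. -/
def diamond : Bool × Bool → Bool × Bool → Bool × Bool
  | (false, false), x => x
  | (false, true), _ => (false, true)
  | (true, false), _ => (true, false)
  | (true, true), (a, b) => (!a, !b)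

/-- The state `s^{(i)}(g,h)` of the Gray-code comparison FSM after processing the
input pairs `g_1 h_1, …, g_i h_i`, starting from state `00`. -/
def fsmState (B : ℕ) (g h : Fin B → Bool) (i : ℕ) : Bool × Bool :=
  (List.range i).foldl
    (fun s j => if hj : j < B then diamond s (g ⟨j, hj⟩, h ⟨j, hj⟩) else s)
    (false, false)

/-- Resolutions of a possibly-metastable pair. -/
def resP (p : KBit × KBit) : Set (Bool × Bool) :=
  {q | (∀ b : Bool, p.1 = some b → q.1 = b) ∧ (∀ b : Bool, p.2 = some b → q.2 = b)}

open Classical in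
/-- Bitwise superposition of a set of binary pairs. -/
noncomputable def supP (S : Set (Bool × Bool)) : KBit × KBit :=
  ((if ∀ s ∈ S, s.1 = true then some true
    else if ∀ s ∈ S, s.1 = false then some false else none),
   (if ∀ s ∈ S, s.2 = true then some true
    else if ∀ s ∈ S, s.2 = false then some false else none))

/-- `s^{(i)}_M(g,h)`: the superposition, over all resolutions `g' ∈ res(g)` and
`h' ∈ res(h)`, of the FSM state after processing the first `i` bit pairs. -/
noncomputable def sM (B : ℕ) (g h : Fin B → KBit) (i : ℕ) : KBit × KBit :=
  supP {s | ∃ g' ∈ res g, ∃ h' ∈ res h, s = fsmState B g' h' i}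


-- Basic step lemmas
lemma fsmState_zero (B : ℕ) (g h : Fin B → Bool) : fsmState B g h 0 = (false, false) := rfl

lemma fsmState_succ (B : ℕ) (g h : Fin B → Bool) (i : ℕ) (hi : i < B) :
    fsmState B g h (i + 1) = diamond (fsmState B g h i) (g ⟨i, hi⟩, h ⟨i, hi⟩) := by
  simp [fsmState, List.range_succ, hi]

/-- Parity of the first `i` bits. -/
def par (B : ℕ) (g : Fin B → Bool) (i : ℕ) : Bool :=
  (List.range i).foldl (fun p j => if hj : j < B then xor p (g ⟨j, hj⟩) else p) false

lemma par_zero (B : ℕ) (g : Fin B → Bool) : par B g 0 = false := rfl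

lemma par_succ (B : ℕ) (g : Fin B → Bool) (i : ℕ) (hi : i < B) :
    par B g (i + 1) = xor (par B g i) (g ⟨i, hi⟩) := by
  simp [par, List.range_succ, hi]

lemma par_congr (B : ℕ) (g h : Fin B → Bool) :
    ∀ i, i ≤ B → (∀ j : Fin B, (j : ℕ) < i → g j = h j) → par B g i = par B h i := by
  intro i
  induction i with
  | zero => intro _ _; rfl
  | succ i ih =>
    intro hi hpre
    have hiB : i < B := hi
    rw [par_succ B g i hiB, par_succ B h i hiB,
      ih (le_of_lt hiB) (fun j hj => hpre j (Nat.lt_succ_of_lt hj)),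
      hpre ⟨i, hiB⟩ (Nat.lt_succ_self i)]

lemma diamond_diag (p c : Bool) : diamond (p, p) (c, c) = (xor p c, xor p c) := by
  cases p <;> cases c <;> rfl

lemma diamond_anti (a : Bool) (q : Bool × Bool) : diamond (a, !a) q = (a, !a) := by
  cases a <;> rfl
lemma rg_testBit : ∀ (B x : ℕ), x < 2 ^ B → ∀ j : Fin B,
    rg B x j = ((x.testBit (B - 1 - (j : ℕ))).xor (x.testBit (B - (j : ℕ)))) := by
  intro B
  induction B with
  | zero => intro x _ j; exact j.elim0
  | succ B ih =>
    intro x hx j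
    refine Fin.cases ?_ ?_ j
    · -- head
      have h1 : x.testBit (B + 1) = false := Nat.testBit_lt_two_pow hx
      have h2 : x / 2 ^ B < 2 := by
        rw [Nat.div_lt_iff_lt_mul (Nat.two_pow_pos B)]
        calc x < 2 ^ (B + 1) := hx
        _ = 2 * 2 ^ B := by ring
        _ ≤ 2 * 2 ^ B := le_refl _
      have h3 : x.testBit B = decide (2 ^ B ≤ x) := by
        rw [Nat.testBit_eq_decide_div_mod_eq]
        rcases Nat.lt_or_ge x (2 ^ B) with h | h
        · have : x / 2 ^ B = 0 := Nat.div_eq_of_lt h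
          simp [this, Nat.not_le.mpr h]
        · have h4 : 1 ≤ x / 2 ^ B := (Nat.one_le_div_iff (Nat.two_pow_pos B)).mpr h
          have : x / 2 ^ B = 1 := by omega
          simp [this, h]
      simp [rg, h1, h3]
    · -- tail
      intro j'
      set x' : ℕ := if x < 2 ^ B then x else 2 ^ (B + 1) - 1 - x with hx'
      have hlt : x' < 2 ^ B := by
        by_cases h : x < 2 ^ B
        · simpa [hx', h]
        · simp only [hx', if_neg h]
          have : 2 ^ (B + 1) = 2 ^ B + 2 ^ B := by ring
          omega
      have htail : rg (B + 1) x j'.succ = rg B x' j' := by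
        simp [rg, hx']
      have hIH := ih x' hlt j'
      have hj' : (j' : ℕ) < B := j'.isLt
      have e1 : (B + 1) - 1 - ((j'.succ : Fin (B+1)) : ℕ) = B - 1 - (j' : ℕ) := by
        simp [Fin.val_succ]; omega
      have e2 : (B + 1) - ((j'.succ : Fin (B+1)) : ℕ) = B - (j' : ℕ) := by
        simp [Fin.val_succ]
      rw [htail, hIH, e1, e2]
      by_cases h : x < 2 ^ B
      · simp [hx', h]
      · simp only [hx', if_neg h]
        have hxle : x < 2 ^ (B + 1) := hx
        have hrw : 2 ^ (B + 1) - 1 - x = 2 ^ (B + 1) - (x + 1) := by omega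
        have hbit : ∀ m, m ≤ B → (2 ^ (B + 1) - 1 - x).testBit m = !x.testBit m := by
          intro m hm
          rw [hrw, Nat.testBit_two_pow_sub_succ hxle m]
          simp [Nat.lt_succ_of_le hm]
        rw [hbit _ (by omega), hbit _ (by omega)]
        cases x.testBit (B - 1 - (j' : ℕ)) <;> cases x.testBit (B - (j' : ℕ)) <;> rfl
lemma par_rg (B x : ℕ) (hx : x < 2 ^ B) :
    ∀ i, i ≤ B → par B (rg B x) i = x.testBit (B - i) := by
  intro i
  induction i with
  | zero =>
    intro _
    rw [par_zero]
    exact (Nat.testBit_lt_two_pow (by simpa using hx)).symm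
  | succ i ih =>
    intro hi
    have hiB : i < B := hi
    rw [par_succ B _ i hiB, ih (le_of_lt hiB), rg_testBit B x hx ⟨i, hiB⟩]
    have e1 : B - 1 - i = B - (i + 1) := by omega
    rw [e1]
    cases x.testBit (B - (i + 1)) <;> cases x.testBit (B - i) <;> rfl

lemma pre_div (B x y : ℕ) (hx : x < 2 ^ B) (hy : y < 2 ^ B) :
    ∀ i, i ≤ B → (∀ j : Fin B, (j : ℕ) < i → rg B x j = rg B y j) →
      x / 2 ^ (B - i) = y / 2 ^ (B - i) := by
  intro i
  induction i with
  | zero =>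
    intro _ _
    simp [Nat.div_eq_of_lt hx, Nat.div_eq_of_lt hy]
  | succ i ih =>
    intro hi hpre
    have hiB : i < B := hi
    have hdiv : x / 2 ^ (B - i) = y / 2 ^ (B - i) :=
      ih (le_of_lt hiB) (fun j hj => hpre j (Nat.lt_succ_of_lt hj))
    have hpar : par B (rg B x) (i + 1) = par B (rg B y) (i + 1) :=
      par_congr B _ _ (i + 1) hi hpre
    rw [par_rg B x hx (i + 1) hi, par_rg B y hy (i + 1) hi] at hpar
    have hb : x / 2 ^ (B - (i+1)) % 2 = y / 2 ^ (B - (i+1)) % 2 := by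
      rw [Nat.testBit_eq_decide_div_mod_eq, Nat.testBit_eq_decide_div_mod_eq] at hpar
      have hx2 : x / 2 ^ (B - (i+1)) % 2 < 2 := Nat.mod_lt _ (by norm_num)
      have hy2 : y / 2 ^ (B - (i+1)) % 2 < 2 := Nat.mod_lt _ (by norm_num)
      interval_cases h : x / 2 ^ (B - (i+1)) % 2 <;>
        interval_cases h' : y / 2 ^ (B - (i+1)) % 2 <;>
          simp_all
    have hq : x / 2 ^ (B - (i+1)) / 2 = y / 2 ^ (B - (i+1)) / 2 := by
      rw [Nat.div_div_eq_div_mul, Nat.div_div_eq_div_mul]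
      have : 2 ^ (B - (i+1)) * 2 = 2 ^ (B - i) := by
        rw [← pow_succ]; congr 1; omega
      rw [this]; exact hdiv
    omega
lemma high_bits_eq {x y n : ℕ} (h : x / 2 ^ n = y / 2 ^ n) :
    ∀ m, n ≤ m → x.testBit m = y.testBit m := by
  intro m hm
  have e : m = n + (m - n) := by omega
  rw [e, ← Nat.testBit_shiftRight, ← Nat.testBit_shiftRight,
    Nat.shiftRight_eq_div_pow, Nat.shiftRight_eq_div_pow, h]

lemma rg_order (B x y i : ℕ) (hx : x < 2 ^ B) (hy : y < 2 ^ B) (hi : i < B)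
    (hpre : ∀ j : Fin B, (j : ℕ) < i → rg B x j = rg B y j)
    (hne : rg B x ⟨i, hi⟩ ≠ rg B y ⟨i, hi⟩) :
    x < y ↔ rg B y ⟨i, hi⟩ ≠ par B (rg B x) i := by
  set k := B - 1 - i with hk
  have hk1 : k + 1 = B - i := by omega
  have hdiv : x / 2 ^ (B - i) = y / 2 ^ (B - i) := pre_div B x y hx hy i (le_of_lt hi) hpre
  have hhigh : ∀ m, k < m → x.testBit m = y.testBit m := by
    intro m hm
    exact high_bits_eq hdiv m (by omega)
  have hc : x.testBit (k + 1) = y.testBit (k + 1) := hhigh (k + 1) (Nat.lt_succ_self k)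
  have hrx : rg B x ⟨i, hi⟩ = (x.testBit k).xor (x.testBit (k + 1)) := by
    rw [rg_testBit B x hx ⟨i, hi⟩]
    congr 2 <;> simp only [Fin.val_mk] <;> omega
  have hry : rg B y ⟨i, hi⟩ = (y.testBit k).xor (y.testBit (k + 1)) := by
    rw [rg_testBit B y hy ⟨i, hi⟩]
    congr 2 <;> simp only [Fin.val_mk] <;> omega
  have hbne : x.testBit k ≠ y.testBit k := by
    intro h; apply hne; rw [hrx, hry, h, hc]
  have hpar : par B (rg B x) i = x.testBit (k + 1) := by
    rw [par_rg B x hx i (le_of_lt hi), hk1]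
  rw [hry, hpar, ← hc]
  cases hyk : y.testBit k with
  | true =>
    have hxk : x.testBit k = false := by
      cases h : x.testBit k
      · rfl
      · exact absurd (h.trans hyk.symm) hbne
    have : x < y := Nat.lt_of_testBit k hxk hyk hhigh
    simp only [this, true_iff]
    cases x.testBit (k + 1) <;> simp
  | false =>
    have hxk : x.testBit k = true := by
      cases h : x.testBit k
      · exact absurd (h.trans hyk.symm) hbne
      · rfl
    have : y < x := Nat.lt_of_testBit k hyk hxk (fun j hj => (hhigh j hj).symm)
    have hnlt : ¬ x < y := by omega
    simp only [hnlt, false_iff, not_not]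
    cases x.testBit (k + 1) <;> simp
lemma fsm_correct (B x y : ℕ) (hx : x < 2 ^ B) (hy : y < 2 ^ B) :
    ∀ i, i ≤ B →
    fsmState B (rg B x) (rg B y) i =
      if ∀ j : Fin B, (j : ℕ) < i → rg B x j = rg B y j
      then (par B (rg B x) i, par B (rg B x) i)
      else (decide (y < x), decide (x < y)) := by
  intro i
  induction i with
  | zero =>
    intro _
    rw [if_pos (fun j hj => absurd hj (by omega))]
    simp [fsmState_zero, par_zero]
  | succ i ih =>
    intro hi
    have hiB : i < B := hi
    rw [fsmState_succ B _ _ i hiB, ih (le_of_lt hiB)]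
    by_cases hp1 : ∀ j : Fin B, (j : ℕ) < i + 1 → rg B x j = rg B y j
    · rw [if_pos (fun j hj => hp1 j (Nat.lt_succ_of_lt hj)), if_pos hp1]
      have hbit : rg B x ⟨i, hiB⟩ = rg B y ⟨i, hiB⟩ := hp1 ⟨i, hiB⟩ (Nat.lt_succ_self i)
      rw [← hbit, diamond_diag, par_succ B _ i hiB]
    · rw [if_neg hp1]
      by_cases hp0 : ∀ j : Fin B, (j : ℕ) < i → rg B x j = rg B y j
      · rw [if_pos hp0]
        have hbitne : rg B x ⟨i, hiB⟩ ≠ rg B y ⟨i, hiB⟩ := by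
          intro h
          apply hp1
          intro j hj
          rcases Nat.lt_succ_iff_lt_or_eq.mp hj with h' | h'
          · exact hp0 j h'
          · have : j = ⟨i, hiB⟩ := Fin.ext h'
            rw [this]; exact h
        have horder := rg_order B x y i hx hy hiB hp0 hbitne
        have hxy : x ≠ y := by rintro rfl; exact hbitne rfl
        have hc : rg B x ⟨i, hiB⟩ = !(rg B y ⟨i, hiB⟩) := by
          cases h1 : rg B x ⟨i, hiB⟩ <;> cases h2 : rg B y ⟨i, hiB⟩ <;>
            simp_all
        rw [hc]
        cases hd : rg B y ⟨i, hiB⟩ <;> cases hp2 : par B (rg B x) i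
        · -- d = false, p = false : d = p so ¬ x < y, hence y < x
          have h1 : ¬ x < y := by rw [horder]; simp [hd, hp2]
          have h2 : y < x := by omega
          simp [diamond, h1, h2]
        · -- d = false, p = true : d ≠ p so x < y
          have h1 : x < y := horder.mpr (by simp [hd, hp2])
          have h2 : ¬ y < x := by omega
          simp [diamond, h1, h2]
        · -- d = true, p = false : x < y
          have h1 : x < y := horder.mpr (by simp [hd, hp2])
          have h2 : ¬ y < x := by omega
          simp [diamond, h1, h2]
        · -- d = true, p = true : ¬ x < y
          have h1 : ¬ x < y := by rw [horder]; simp [hd, hp2]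
          have h2 : y < x := by omega
          simp [diamond, h1, h2]
      · rw [if_neg hp0]
        have hxy : x ≠ y := by
          rintro rfl
          exact hp0 (fun j _ => rfl)
        rcases Nat.lt_or_ge x y with h | h
        · have h2 : ¬ y < x := by omega
          have e1 : decide (x < y) = true := by simp [h]
          have e2 : decide (y < x) = false := by simp [h2]
          rw [e1, e2]
          exact (diamond_anti false _).trans (by simp)
        · have h1 : y < x := by omega
          have h2 : ¬ x < y := by omega
          have e1 : decide (y < x) = true := by simp [h1]
          have e2 : decide (x < y) = false := by simp [h2]
          rw [e1, e2]
          exact (diamond_anti true _).trans (by simp)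
lemma rg_head (B x : ℕ) : rg (B + 1) x 0 = decide (2 ^ B ≤ x) := rfl

lemma rg_tail (B x : ℕ) (j' : Fin B) :
    rg (B + 1) x j'.succ = rg B (if x < 2 ^ B then x else 2 ^ (B + 1) - 1 - x) j' := by
  simp [rg]

lemma rg_succ_diff : ∀ (B x : ℕ), x + 1 < 2 ^ B →
    ∃ k : Fin B, rg B x k ≠ rg B (x + 1) k ∧
      ∀ j : Fin B, j ≠ k → rg B x j = rg B (x + 1) j := by
  intro B
  induction B with
  | zero => intro x hx; simp at hx
  | succ B ih =>
    intro x hx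
    rcases Nat.lt_trichotomy (x + 1) (2 ^ B) with h | h | h
    · -- both in lower half
      obtain ⟨k', hk1, hk2⟩ := ih x h
      have e1 : ∀ j' : Fin B, rg (B + 1) x j'.succ = rg B x j' := by
        intro j'; rw [rg_tail]; simp [Nat.lt_of_succ_lt h]
      have e2 : ∀ j' : Fin B, rg (B + 1) (x + 1) j'.succ = rg B (x + 1) j' := by
        intro j'; rw [rg_tail]; simp [h]
      refine ⟨k'.succ, ?_, ?_⟩
      · rw [e1, e2]; exact hk1
      · intro j hj
        rcases Fin.eq_zero_or_eq_succ j with rfl | ⟨j', rfl⟩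
        · rw [rg_head, rg_head]
          simp [Nat.not_le.mpr (Nat.lt_of_succ_lt h), Nat.not_le.mpr h]
        · have hj'k : j' ≠ k' := fun hh => hj (by rw [hh])
          rw [e1, e2]; exact hk2 j' hj'k
    · -- x + 1 = 2 ^ B : heads differ, tails equal
      have hx2 : x < 2 ^ B := by omega
      refine ⟨0, ?_, ?_⟩
      · rw [rg_head, rg_head]
        simp [Nat.not_le.mpr hx2, h.symm.le]
      · intro j hj
        rcases Fin.eq_zero_or_eq_succ j with rfl | ⟨j', rfl⟩
        · exact absurd rfl hj
        · rw [rg_tail, rg_tail]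
          have e3 : 2 ^ (B + 1) - 1 - (x + 1) = x := by
            have : 2 ^ (B + 1) = 2 ^ B + 2 ^ B := by ring
            omega
          rw [if_pos hx2, if_neg (by omega), e3]
    · -- both in upper half
      have hx2 : ¬ x < 2 ^ B := by omega
      have hx12 : ¬ x + 1 < 2 ^ B := by omega
      have h2 : 2 ^ (B + 1) = 2 ^ B + 2 ^ B := by ring
      set y := 2 ^ (B + 1) - 1 - (x + 1) with hy
      have hy1 : y + 1 = 2 ^ (B + 1) - 1 - x := by omega
      have hyB : y + 1 < 2 ^ B := by omega
      obtain ⟨k', hk1, hk2⟩ := ih y hyB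
      have e1 : ∀ j' : Fin B, rg (B + 1) x j'.succ = rg B (y + 1) j' := by
        intro j'; rw [rg_tail, if_neg hx2, ← hy1]
      have e2 : ∀ j' : Fin B, rg (B + 1) (x + 1) j'.succ = rg B y j' := by
        intro j'; rw [rg_tail, if_neg hx12, ← hy]
      refine ⟨k'.succ, ?_, ?_⟩
      · rw [e1, e2]
        exact fun hh => hk1 hh.symm
      · intro j hj
        rcases Fin.eq_zero_or_eq_succ j with rfl | ⟨j', rfl⟩
        · have hle1 : 2 ^ B ≤ x := Nat.not_lt.mp hx2
          have hle2 : 2 ^ B ≤ x + 1 := by omega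
          rw [rg_head, rg_head]
          simp [hle1, hle2]
        · have hj'k : j' ≠ k' := fun hh => hj (by rw [hh])
          rw [e1, e2]
          exact (hk2 j' hj'k).symm
lemma res_stable (B x : ℕ) : res (stableStr B x) = {rg B x} := by
  ext y
  simp only [res, stableStr, Set.mem_setOf_eq, Set.mem_singleton_iff]
  constructor
  · intro hmem
    funext i
    exact hmem i (rg B x i) rfl
  · rintro rfl i b hb
    exact Option.some_injective _ hb

lemma res_super (B x : ℕ) (hx : x + 1 < 2 ^ B) :
    res (superStr B x) = {rg B x, rg B (x + 1)} := by
  obtain ⟨k, hk1, hk2⟩ := rg_succ_diff B x hx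
  ext y
  simp only [res, superStr, Set.mem_setOf_eq, Set.mem_insert_iff, Set.mem_singleton_iff]
  constructor
  · intro hmem
    have hag : ∀ j : Fin B, j ≠ k → y j = rg B x j := by
      intro j hj
      apply hmem j
      rw [if_pos (hk2 j hj)]
    by_cases hyk : y k = rg B x k
    · left
      funext j
      by_cases hj : j = k
      · rw [hj]; exact hyk
      · exact hag j hj
    · right
      funext j
      by_cases hj : j = k
      · subst hj
        cases h1 : y j <;> cases h2 : rg B x j <;> cases h3 : rg B (x + 1) j <;>
          simp_all
      · rw [hag j hj, hk2 j hj]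
  · rintro (rfl | rfl) i b hb
    · by_cases h : rg B x i = rg B (x + 1) i
      · rw [if_pos h] at hb; exact Option.some_injective _ hb
      · rw [if_neg h] at hb; exact absurd hb (by simp)
    · by_cases h : rg B x i = rg B (x + 1) i
      · rw [if_pos h] at hb
        rw [← h]; exact Option.some_injective _ hb
      · rw [if_neg h] at hb; exact absurd hb (by simp)

open Classical in
lemma supP_ne_MM_fst (S : Set (Bool × Bool)) (c : Bool) (h : ∀ s ∈ S, s.1 = c) :
    supP S ≠ (none, none) := by
  intro heq
  have hne : (supP S).1 ≠ none := by
    simp only [supP]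
    split_ifs with a b
    · simp
    · simp
    · exfalso
      cases c
      · exact b h
      · exact a h
  rw [heq] at hne
  exact hne rfl

open Classical in
lemma supP_eq_MM (S : Set (Bool × Bool)) (s t : Bool × Bool) (hs : s ∈ S) (ht : t ∈ S)
    (h1 : s.1 ≠ t.1) (h2 : s.2 ≠ t.2) : supP S = (none, none) := by
  have n1 : ¬ ∀ u ∈ S, u.1 = true := by
    intro H
    exact h1 ((H s hs).trans (H t ht).symm)
  have n2 : ¬ ∀ u ∈ S, u.1 = false := by
    intro H
    exact h1 ((H s hs).trans (H t ht).symm)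
  have n3 : ¬ ∀ u ∈ S, u.2 = true := by
    intro H
    exact h2 ((H s hs).trans (H t ht).symm)
  have n4 : ¬ ∀ u ∈ S, u.2 = false := by
    intro H
    exact h2 ((H s hs).trans (H t ht).symm)
  simp only [supP, if_neg n1, if_neg n2, if_neg n3, if_neg n4]

open Classical in
lemma supP_MM_extract (S : Set (Bool × Bool)) (h : supP S = (none, none)) :
    (∃ s ∈ S, s.1 = true) ∧ (∃ s ∈ S, s.1 = false) ∧
      (∃ s ∈ S, s.2 = true) ∧ (∃ s ∈ S, s.2 = false) := by
  have h1 : (supP S).1 = none := by rw [h]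
  have h2 : (supP S).2 = none := by rw [h]
  simp only [supP] at h1 h2
  split_ifs at h1 with a1 a2 <;> try simp at h1
  split_ifs at h2 with b1 b2 <;> try simp at h2
  push_neg at a1 a2 b1 b2
  obtain ⟨s1, hs1, e1⟩ := a1
  obtain ⟨s2, hs2, e2⟩ := a2
  obtain ⟨s3, hs3, e3⟩ := b1
  obtain ⟨s4, hs4, e4⟩ := b2
  exact ⟨⟨s2, hs2, by simpa using e2⟩, ⟨s1, hs1, by simpa using e1⟩,
    ⟨s4, hs4, by simpa using e4⟩, ⟨s3, hs3, by simpa using e3⟩⟩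

lemma par_flip (B : ℕ) (g g' : Fin B → Bool) (k : Fin B) (hk : g k ≠ g' k)
    (hag : ∀ j : Fin B, j ≠ k → g j = g' j) :
    ∀ j, (k : ℕ) < j → j ≤ B → par B g j ≠ par B g' j := by
  intro j
  induction j with
  | zero => omega
  | succ j ih =>
    intro hkj hjB
    have hjB' : j < B := hjB
    rw [par_succ B g j hjB', par_succ B g' j hjB']
    rcases Nat.lt_succ_iff_lt_or_eq.mp hkj with h | h
    · -- k < j : IH, bits at j equal
      have hne := ih h (le_of_lt hjB')
      have hbit : g ⟨j, hjB'⟩ = g' ⟨j, hjB'⟩ := by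
        apply hag
        intro hh
        rw [← hh] at h
        simp at h
      rw [hbit]
      intro hcontra
      apply hne
      cases h1 : par B g j <;> cases h2 : par B g' j <;>
        rw [h1, h2] at hcontra <;> simp_all
    · -- k = j (as naturals), so ⟨j,_⟩ = k
      have hkeq : (⟨j, hjB'⟩ : Fin B) = k := Fin.ext h.symm
      have hpeq : par B g j = par B g' j := by
        apply par_congr B g g' j (le_of_lt hjB')
        intro j' hj'
        apply hag
        intro hh
        rw [hh, ← h] at hj'
        simp at hj'
      rw [hpeq, hkeq]
      intro hcontra
      apply hk
      cases h1 : par B g' j <;> rw [h1] at hcontra <;>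
        cases h2 : g k <;> cases h3 : g' k <;> simp_all
lemma dvd_succ_facts {d x : ℕ} (hd : 0 < d) (hdvd : d ∣ x + 1) :
    x % d = d - 1 ∧ (x + 1) / d = x / d + 1 := by
  obtain ⟨m, hm⟩ := hdvd
  cases m with
  | zero => simp at hm
  | succ m' =>
    have hring : d * (m' + 1) = m' * d + d := by ring
    have hx : x = (d - 1) + m' * d := by omega
    have hmod : x % d = d - 1 := by
      rw [hx, Nat.add_mul_mod_self_right, Nat.mod_eq_of_lt (by omega)]
    have h1 : x / d = m' := by
      rw [hx, Nat.add_mul_div_right _ _ hd, Nat.div_eq_of_lt (by omega)]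
      omega
    have h2 : (x + 1) / d = m' + 1 := by
      rw [hm, Nat.mul_div_cancel_left _ hd]
    exact ⟨hmod, by omega⟩

lemma eq_of_div_mod {d x y : ℕ} (h1 : x / d = y / d) (h2 : x % d = y % d) : x = y := by
  have e : d * (x / d) + x % d = d * (y / d) + y % d := by rw [h1, h2]
  rw [Nat.div_add_mod, Nat.div_add_mod] at e
  exact e

lemma contra_diag (x₀ x₁ y₀ y₁ a b a' b' d : ℕ) (hd : 0 < d)
    (hx1 : x₁ = x₀ ∨ x₁ = x₀ + 1) (hy1 : y₁ = y₀ ∨ y₁ = y₀ + 1)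
    (hne : x₀ ≠ y₀ ∨ x₁ ≠ y₁ ∨ x₁ = x₀)
    (ha : a = x₀ ∨ a = x₁) (hb : b = y₀ ∨ b = y₁)
    (ha' : a' = x₀ ∨ a' = x₁) (hb' : b' = y₀ ∨ b' = y₁)
    (e1 : a / d = b / d) (e2 : a' / d = b' / d)
    (m1 : a / d % 2 = 1) (m2 : a' / d % 2 = 0) : False := by
  have haa' : a ≠ a' := by
    intro h; rw [h] at m1; omega
  rcases hx1 with rfl | rfl
  · rcases ha with rfl | rfl <;> rcases ha' with rfl | rfl <;> exact haa' rfl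
  rcases hy1 with rfl | rfl
  · have hb2 : b = y₁ := by rcases hb with h | h <;> exact h
    have hb'2 : b' = y₁ := by rcases hb' with h | h <;> exact h
    rw [hb2] at e1
    rw [hb'2] at e2
    omega
  by_cases hdx : d ∣ x₀ + 1
  · by_cases hdy : d ∣ y₀ + 1
    · obtain ⟨fx1, fx2⟩ := dvd_succ_facts hd hdx
      obtain ⟨fy1, fy2⟩ := dvd_succ_facts hd hdy
      have hxy' : x₀ / d = y₀ / d → False := by
        intro hq
        have hx0y0 : x₀ = y₀ := eq_of_div_mod hq (by omega)
        rcases hne with h | h | h <;> omega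
      rcases ha with rfl | rfl <;> rcases hb with rfl | rfl <;>
        rcases ha' with rfl | rfl <;> rcases hb' with rfl | rfl <;>
          first
          | exact haa' rfl
          | omega
          | exact hxy' (by omega)
    · have fy2 : (y₀ + 1) / d = y₀ / d := by
        rw [Nat.succ_div, if_neg hdy]
        omega
      rcases ha with rfl | rfl <;> rcases hb with rfl | rfl <;>
        rcases ha' with rfl | rfl <;> rcases hb' with rfl | rfl <;>
          first
          | exact haa' rfl
          | omega
  · have fx2 : (x₀ + 1) / d = x₀ / d := by
      rw [Nat.succ_div, if_neg hdx]
      omega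
    rcases ha with rfl | rfl <;> rcases ha' with rfl | rfl <;>
      first
      | exact haa' rfl
      | omega

lemma contra_lt (x₀ x₁ y₀ y₁ a b a' b' : ℕ)
    (hx1 : x₁ = x₀ ∨ x₁ = x₀ + 1) (hy1 : y₁ = y₀ ∨ y₁ = y₀ + 1)
    (hne : x₀ ≠ y₀ ∨ x₁ ≠ y₁ ∨ x₁ = x₀)
    (ha : a = x₀ ∨ a = x₁) (hb : b = y₀ ∨ b = y₁)
    (ha' : a' = x₀ ∨ a' = x₁) (hb' : b' = y₀ ∨ b' = y₁)
    (hlt : a < b) (hgt : b' < a') : False := by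
  rcases hx1 with rfl | rfl <;> rcases hy1 with rfl | rfl <;>
    rcases ha with rfl | rfl <;> rcases hb with rfl | rfl <;>
      rcases ha' with rfl | rfl <;> rcases hb' with rfl | rfl <;>
        rcases hne with h | h | h <;> omega
lemma fsm_classify (B x y i : ℕ) (hi : i ≤ B) (hx : x < 2 ^ B) (hy : y < 2 ^ B) :
    (x / 2 ^ (B - i) = y / 2 ^ (B - i) ∧
      fsmState B (rg B x) (rg B y) i =
        (decide (x / 2 ^ (B - i) % 2 = 1), decide (x / 2 ^ (B - i) % 2 = 1)))
  ∨ (x ≠ y ∧ fsmState B (rg B x) (rg B y) i = (decide (y < x), decide (x < y))) := by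
  rw [fsm_correct B x y hx hy i hi]
  by_cases hp : ∀ j : Fin B, (j : ℕ) < i → rg B x j = rg B y j
  · left
    refine ⟨pre_div B x y hx hy i hi hp, ?_⟩
    rw [if_pos hp]
    have hpar : par B (rg B x) i = decide (x / 2 ^ (B - i) % 2 = 1) := by
      rw [par_rg B x hx i hi, Nat.testBit_eq_decide_div_mod_eq]
    rw [hpar]
  · right
    refine ⟨?_, by rw [if_neg hp]⟩
    rintro rfl
    exact hp fun j _ => rfl

lemma master (B i : ℕ) (hi : i ≤ B) (x₀ x₁ y₀ y₁ : ℕ)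
    (hx1 : x₁ = x₀ ∨ x₁ = x₀ + 1) (hy1 : y₁ = y₀ ∨ y₁ = y₀ + 1)
    (hxB : x₁ < 2 ^ B) (hyB : y₁ < 2 ^ B)
    (hne : x₀ ≠ y₀ ∨ x₁ ≠ y₁ ∨ x₁ = x₀)
    (S : Set (Bool × Bool))
    (hS : ∀ s ∈ S, ∃ a, (a = x₀ ∨ a = x₁) ∧ ∃ b, (b = y₀ ∨ b = y₁) ∧
        s = fsmState B (rg B a) (rg B b) i) :
    supP S ≠ (none, none) := by
  intro hMM
  set d := 2 ^ (B - i) with hdd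
  have hd : 0 < d := Nat.two_pow_pos _
  have extract : ∀ s ∈ S, ∃ a b, (a = x₀ ∨ a = x₁) ∧ (b = y₀ ∨ b = y₁) ∧
      ((a / d = b / d ∧ s = (decide (a / d % 2 = 1), decide (a / d % 2 = 1)))
        ∨ (a ≠ b ∧ s = (decide (b < a), decide (a < b)))) := by
    intro s hs
    obtain ⟨a, ha, b, hb, hseq⟩ := hS s hs
    have haB : a < 2 ^ B := by rcases ha with rfl | rfl <;> omega
    have hbB : b < 2 ^ B := by rcases hb with rfl | rfl <;> omega
    refine ⟨a, b, ha, hb, ?_⟩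
    rcases fsm_classify B a b i hi haB hbB with ⟨h1, h2⟩ | ⟨h1, h2⟩
    · exact Or.inl ⟨h1, by rw [hseq, h2, hdd]⟩
    · exact Or.inr ⟨h1, by rw [hseq, h2]⟩
  obtain ⟨⟨s1, hs1, e1⟩, ⟨s2, hs2, e2⟩, ⟨s3, hs3, e3⟩, ⟨s4, hs4, e4⟩⟩ := supP_MM_extract S hMM
  obtain ⟨a1, b1, ha1, hb1, hc1⟩ := extract s1 hs1
  obtain ⟨a2, b2, ha2, hb2, hc2⟩ := extract s2 hs2
  obtain ⟨a3, b3, ha3, hb3, hc3⟩ := extract s3 hs3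
  obtain ⟨a4, b4, ha4, hb4, hc4⟩ := extract s4 hs4
  -- D3 from s3.2 = true
  have D3 : (a3 / d = b3 / d ∧ a3 / d % 2 = 1) ∨ a3 < b3 := by
    rcases hc3 with ⟨h1, h2⟩ | ⟨h1, h2⟩
    · rw [h2] at e3; simp at e3; exact Or.inl ⟨h1, e3⟩
    · rw [h2] at e3; simp at e3; exact Or.inr e3
  have D4 : (a4 / d = b4 / d ∧ a4 / d % 2 = 0) ∨ b4 < a4 := by
    rcases hc4 with ⟨h1, h2⟩ | ⟨h1, h2⟩
    · rw [h2] at e4; simp at e4; exact Or.inl ⟨h1, by omega⟩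
    · rw [h2] at e4; simp at e4; right; omega
  have D1 : (a1 / d = b1 / d ∧ a1 / d % 2 = 1) ∨ b1 < a1 := by
    rcases hc1 with ⟨h1, h2⟩ | ⟨h1, h2⟩
    · rw [h2] at e1; simp at e1; exact Or.inl ⟨h1, e1⟩
    · rw [h2] at e1; simp at e1; exact Or.inr e1
  have D2 : (a2 / d = b2 / d ∧ a2 / d % 2 = 0) ∨ a2 < b2 := by
    rcases hc2 with ⟨h1, h2⟩ | ⟨h1, h2⟩
    · rw [h2] at e2; simp at e2; exact Or.inl ⟨h1, by omega⟩
    · rw [h2] at e2; simp at e2; right; omega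
  rcases D3 with hDT | hLT
  · rcases D4 with hDF | hGT
    · exact contra_diag x₀ x₁ y₀ y₁ a3 b3 a4 b4 d hd hx1 hy1 hne ha3 hb3 ha4 hb4
        hDT.1 hDF.1 hDT.2 hDF.2
    · rcases D2 with hDF | hLT
      · exact contra_diag x₀ x₁ y₀ y₁ a3 b3 a2 b2 d hd hx1 hy1 hne ha3 hb3 ha2 hb2
          hDT.1 hDF.1 hDT.2 hDF.2
      · exact contra_lt x₀ x₁ y₀ y₁ a2 b2 a4 b4 hx1 hy1 hne ha2 hb2 ha4 hb4 hLT hGT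
  · rcases D4 with hDF | hGT
    · rcases D1 with hDT | hGT
      · exact contra_diag x₀ x₁ y₀ y₁ a1 b1 a4 b4 d hd hx1 hy1 hne ha1 hb1 ha4 hb4
          hDT.1 hDF.1 hDT.2 hDF.2
      · exact contra_lt x₀ x₁ y₀ y₁ a3 b3 a1 b1 hx1 hy1 hne ha3 hb3 ha1 hb1 hLT hGT
    · exact contra_lt x₀ x₁ y₀ y₁ a3 b3 a4 b4 hx1 hy1 hne ha3 hb3 ha4 hb4 hLT hGT

/-- If for valid strings `g, h` the metastable prefix state `s^{(i)}_M` equals `MM`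
for some `i ∈ [1,B]`, then `g = h` and `s^{(j)}_M = MM` for all `j ∈ [i,B]`. -/
theorem sM_MM (B : ℕ) (g h : Fin B → KBit) (hg : g ∈ Valid B) (hh : h ∈ Valid B)
    (i : ℕ) (hi1 : 1 ≤ i) (hiB : i ≤ B) (hMM : sM B g h i = (none, none)) :
    g = h ∧ ∀ j, i ≤ j → j ≤ B → sM B g h j = (none, none) := by
  rcases hg with ⟨x, hxB, rfl⟩ | ⟨x, hxB, rfl⟩ <;>
    rcases hh with ⟨y, hyB, rfl⟩ | ⟨y, hyB, rfl⟩
  · -- stable / stable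
    exfalso
    refine master B i hiB x x y y (Or.inl rfl) (Or.inl rfl) hxB hyB
      (Or.inr (Or.inr rfl)) _ ?_ hMM
    intro s hs
    simp only [Set.mem_setOf_eq] at hs
    obtain ⟨g', hg', h', hh', hseq⟩ := hs
    rw [res_stable] at hg' hh'
    rw [Set.mem_singleton_iff] at hg' hh'
    exact ⟨x, Or.inl rfl, y, Or.inl rfl, by rw [hseq, hg', hh']⟩
  · -- stable / super
    exfalso
    refine master B i hiB x x y (y + 1) (Or.inl rfl) (Or.inr rfl) hxB hyB
      (Or.inr (Or.inr rfl)) _ ?_ hMM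
    intro s hs
    simp only [Set.mem_setOf_eq] at hs
    obtain ⟨g', hg', h', hh', hseq⟩ := hs
    rw [res_stable, Set.mem_singleton_iff] at hg'
    rw [res_super B y hyB, Set.mem_insert_iff, Set.mem_singleton_iff] at hh'
    rcases hh' with rfl | rfl
    · exact ⟨x, Or.inl rfl, y, Or.inl rfl, by rw [hseq, hg']⟩
    · exact ⟨x, Or.inl rfl, y + 1, Or.inr rfl, by rw [hseq, hg']⟩
  · -- super / stable
    exfalso
    have hne : x ≠ y ∨ x + 1 ≠ y ∨ x + 1 = x := by
      by_cases hxy : x = y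
      · right; left; omega
      · left; exact hxy
    refine master B i hiB x (x + 1) y y (Or.inr rfl) (Or.inl rfl) hxB hyB hne _ ?_ hMM
    intro s hs
    simp only [Set.mem_setOf_eq] at hs
    obtain ⟨g', hg', h', hh', hseq⟩ := hs
    rw [res_super B x hxB, Set.mem_insert_iff, Set.mem_singleton_iff] at hg'
    rw [res_stable, Set.mem_singleton_iff] at hh'
    rcases hg' with rfl | rfl
    · exact ⟨x, Or.inl rfl, y, Or.inl rfl, by rw [hseq, hh']⟩
    · exact ⟨x + 1, Or.inr rfl, y, Or.inl rfl, by rw [hseq, hh']⟩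
  · -- super / super
    by_cases hxy : x = y
    case neg =>
      exfalso
      refine master B i hiB x (x + 1) y (y + 1) (Or.inr rfl) (Or.inr rfl) hxB hyB
        (Or.inl hxy) _ ?_ hMM
      intro s hs
      simp only [Set.mem_setOf_eq] at hs
      obtain ⟨g', hg', h', hh', hseq⟩ := hs
      rw [res_super B x hxB, Set.mem_insert_iff, Set.mem_singleton_iff] at hg'
      rw [res_super B y hyB, Set.mem_insert_iff, Set.mem_singleton_iff] at hh'
      rcases hg' with rfl | rfl <;> rcases hh' with rfl | rfl
      · exact ⟨x, Or.inl rfl, y, Or.inl rfl, hseq⟩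
      · exact ⟨x, Or.inl rfl, y + 1, Or.inr rfl, hseq⟩
      · exact ⟨x + 1, Or.inr rfl, y, Or.inl rfl, hseq⟩
      · exact ⟨x + 1, Or.inr rfl, y + 1, Or.inr rfl, hseq⟩
    case pos =>
      subst hxy
      obtain ⟨k, hk1, hk2⟩ := rg_succ_diff B x hxB
      have hres := res_super B x hxB
      have hxB' : x < 2 ^ B := by omega
      -- the differing position k is < i
      have hki : (k : ℕ) < i := by
        by_contra hik
        push_neg at hik
        refine supP_ne_MM_fst _ (par B (rg B x) i) ?_ hMM
        intro s hs
        simp only [Set.mem_setOf_eq] at hs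
        obtain ⟨g', hg', h', hh', hseq⟩ := hs
        rw [hres, Set.mem_insert_iff, Set.mem_singleton_iff] at hg' hh'
        have hpre : ∀ z : Fin B → Bool, (z = rg B x ∨ z = rg B (x + 1)) →
            ∀ j : Fin B, (j : ℕ) < i → z j = rg B x j := by
          rintro z (rfl | rfl) j hj
          · rfl
          · refine (hk2 j ?_).symm
            intro hjk
            rw [hjk] at hj
            omega
        have key : ∀ a, (a = x ∨ a = x + 1) → ∀ b, (b = x ∨ b = x + 1) →
            (fsmState B (rg B a) (rg B b) i).1 = par B (rg B x) i := by
          intro a ha b hb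
          have haB : a < 2 ^ B := by rcases ha with rfl | rfl <;> omega
          have hbB : b < 2 ^ B := by rcases hb with rfl | rfl <;> omega
          have hab : ∀ j : Fin B, (j : ℕ) < i → rg B a j = rg B b j := by
            intro j hj
            have e1 := hpre (rg B a) (by rcases ha with rfl | rfl <;> simp) j hj
            have e2 := hpre (rg B b) (by rcases hb with rfl | rfl <;> simp) j hj
            rw [e1, e2]
          rw [fsm_correct B a b haB hbB i hiB, if_pos hab]
          exact par_congr B (rg B a) (rg B x) i hiB
            (hpre (rg B a) (by rcases ha with rfl | rfl <;> simp))
        rcases hg' with rfl | rfl <;> rcases hh' with rfl | rfl <;>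
          rw [hseq]
        · exact key x (Or.inl rfl) x (Or.inl rfl)
        · exact key x (Or.inl rfl) (x + 1) (Or.inr rfl)
        · exact key (x + 1) (Or.inr rfl) x (Or.inl rfl)
        · exact key (x + 1) (Or.inr rfl) (x + 1) (Or.inr rfl)
      refine ⟨rfl, ?_⟩
      intro j hij hjB
      have hkj : (k : ℕ) < j := lt_of_lt_of_le hki hij
      have hmem1 : rg B x ∈ res (superStr B x) := by
        rw [hres]; exact Set.mem_insert _ _
      have hmem2 : rg B (x + 1) ∈ res (superStr B x) := by
        rw [hres]; exact Set.mem_insert_of_mem _ rfl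
      have hs1 : fsmState B (rg B x) (rg B x) j =
          (par B (rg B x) j, par B (rg B x) j) := by
        rw [fsm_correct B x x hxB' hxB' j hjB, if_pos (fun _ _ => rfl)]
      have hs2 : fsmState B (rg B (x + 1)) (rg B (x + 1)) j =
          (par B (rg B (x + 1)) j, par B (rg B (x + 1)) j) := by
        rw [fsm_correct B (x + 1) (x + 1) hxB hxB j hjB, if_pos (fun _ _ => rfl)]
      have hflip : par B (rg B x) j ≠ par B (rg B (x + 1)) j :=
        par_flip B (rg B x) (rg B (x + 1)) k hk1 hk2 j hkj hjB
      refine supP_eq_MM _ (fsmState B (rg B x) (rg B x) j)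
        (fsmState B (rg B (x + 1)) (rg B (x + 1)) j) ?_ ?_ ?_ ?_
      · exact ⟨rg B x, hmem1, rg B x, hmem1, rfl⟩
      · exact ⟨rg B (x + 1), hmem2, rg B (x + 1), hmem2, rfl⟩
      · rw [hs1, hs2]; exact hflip
      · rw [hs1, hs2]; exact hflip
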